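/- arXiv:2210.02919 — 3 statements merged into one kernel-verified Lean document; each statement's English description precedes it below -/
import Mathlib

section
/- Suppose each f_ij is convex and continuously differentiable with ∇f_ij Lipschitz of constant l_ij (Assumption 1); the pseudo-gradient P is strongly monotone with constant μ > 0 (Assumption 2); and each L_i is the Laplacian of a connected undirected graph on the n_i agents of coalition i (Assumption 3). Then a vector x* ∈ Ω is a Nash equilibrium of the resource allocation game if and only if L_i · (∂f_i/∂x_i)(x*) = 0 for every coalition i ∈ {1,…,N}. -/
noncomputable section
open Matrix
open scoped RealInnerProductSpace

/-- The collective decision space: coalition `i` has block `ℝ^{n i}`;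
the whole space carries the Euclidean (`L²`) norm. -/
abbrev Vec (N : ℕ) (n : Fin N → ℕ) := PiLp 2 (fun i : Fin N => EuclideanSpace ℝ (Fin (n i)))

variable {N : ℕ} {n : Fin N → ℕ}

/-- Coalition-level objective `f_i = ∑_j f_ij`. -/
def coalObj (f : ∀ i : Fin N, Fin (n i) → Vec N n → ℝ) (i : Fin N) (x : Vec N n) : ℝ :=
  ∑ j, f i j x

/-- The gradient of `f_i` with respect to its own block `x_i`, i.e. `∂f_i/∂x_i`. -/
def blockGrad (f : ∀ i : Fin N, Fin (n i) → Vec N n → ℝ) (i : Fin N) (x : Vec N n) :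
    EuclideanSpace ℝ (Fin (n i)) :=
  WithLp.toLp 2 (fun j => gradient (coalObj f i) x i j)

/-- The pseudo-gradient `P(x) = (∂f_1/∂x_1(x), …, ∂f_N/∂x_N(x))`. -/
def pseudoGrad (f : ∀ i : Fin N, Fin (n i) → Vec N n → ℝ) (x : Vec N n) : Vec N n :=
  WithLp.toLp 2 (fun i => blockGrad f i x)

/-- Nash equilibrium of the resource allocation game: `x ∈ Ω` and no coalition can
decrease its objective by unilaterally changing its own (feasible) block. -/
def IsNE (f : ∀ i : Fin N, Fin (n i) → Vec N n → ℝ) (R : Fin N → ℝ) (x : Vec N n) : Prop :=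
  (∀ i, ∑ j, x i j = R i) ∧
  ∀ (i : Fin N) (y : EuclideanSpace ℝ (Fin (n i))), (∑ j, y j = R i) →
    coalObj f i x ≤ coalObj f i (WithLp.toLp 2 (Function.update (WithLp.ofLp x) i y))

/-- `L` is the Laplacian matrix of a connected undirected graph. -/
def IsConnLap {m : ℕ} (L : Matrix (Fin m) (Fin m) ℝ) : Prop :=
  ∃ (G : SimpleGraph (Fin m)) (_ : DecidableRel G.Adj), G.Connected ∧ L = G.lapMatrix ℝ


section Aux

theorem hasDerivAt_line_grad {E : Type*} [NormedAddCommGroup E] [InnerProductSpace ℝ E]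
    [CompleteSpace E] (g : E → ℝ) (G x v : E) (h : HasGradientAt g G x) :
    HasDerivAt (fun t : ℝ => g (x + t • v)) ⟪G, v⟫ 0 := by
  have hline : HasDerivAt (fun t : ℝ => x + t • v) v 0 := by
    simpa using ((hasDerivAt_id (0:ℝ)).smul_const v).const_add x
  have h' : HasFDerivAt g ((InnerProductSpace.toDual ℝ E) G) (x + (0:ℝ) • v) := by
    simpa using h.hasFDerivAt
  have := h'.comp_hasDerivAt 0 hline
  simpa [InnerProductSpace.toDual_apply_apply, Function.comp_def] using this

theorem convexOn_finset_sum {E : Type*} [AddCommGroup E] [Module ℝ E] {ι : Type*}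
    (s : Finset ι) (f : ι → E → ℝ) (h : ∀ i ∈ s, ConvexOn ℝ Set.univ (f i)) :
    ConvexOn ℝ Set.univ (fun x => ∑ i ∈ s, f i x) := by
  classical
  induction s using Finset.induction_on with
  | empty => simpa using convexOn_const (0:ℝ) convex_univ
  | insert _ _ hx ih =>
    rename_i a s'
    simp only [Finset.sum_insert hx]
    exact (h _ (Finset.mem_insert_self _ _)).add
      (ih fun i hi => h i (Finset.mem_insert_of_mem hi))

theorem connLap_mulVec_eq_zero_iff {m : ℕ} {L : Matrix (Fin m) (Fin m) ℝ}
    (hL : IsConnLap L) (b : Fin m → ℝ) :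
    L.mulVec b = 0 ↔ ∀ j k, b j = b k := by
  obtain ⟨G, hdec, hconn, rfl⟩ := hL
  rw [SimpleGraph.lapMatrix_mulVec_eq_zero_iff_forall_reachable]
  exact ⟨fun h j k => h j k (hconn.preconnected j k), fun h j k _ => h j k⟩

end Aux

/-- Lemma 1 of the paper: under Assumptions 1–3, a feasible point `x*`
is a Nash equilibrium iff `L_i · (∂f_i/∂x_i)(x*) = 0` for every coalition `i`. -/
theorem statement0
    (f : ∀ i : Fin N, Fin (n i) → Vec N n → ℝ)
    (l : ∀ i : Fin N, Fin (n i) → ℝ) (μ : ℝ) (R : Fin N → ℝ)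
    (L : ∀ i : Fin N, Matrix (Fin (n i)) (Fin (n i)) ℝ)
    -- Assumption 1: convexity, continuous differentiability, Lipschitz gradients
    (hconv : ∀ i j, ConvexOn ℝ Set.univ (f i j))
    (hdiff : ∀ i j, ContDiff ℝ 1 (f i j))
    (hlip : ∀ i j (a b : Vec N n),
      ‖gradient (f i j) a - gradient (f i j) b‖ ≤ l i j * ‖a - b‖)
    -- Assumption 2: strictly (strongly) monotone pseudo-gradient
    (hμ : 0 < μ)
    (hmono : ∀ a b : Vec N n,
      μ * ‖a - b‖ ^ 2 ≤ ⟪a - b, pseudoGrad f a - pseudoGrad f b⟫)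
    -- Assumption 3: each `L i` is the Laplacian of a connected undirected graph
    (hLap : ∀ i, IsConnLap (L i))
    (xstar : Vec N n) (hfeas : ∀ i, ∑ j, xstar i j = R i) :
    IsNE f R xstar ↔ ∀ i, (L i).mulVec (blockGrad f i xstar) = 0 := by
  classical
  set g : ∀ i : Fin N, Vec N n → ℝ := fun i => coalObj f i with hg
  have hgdiff : ∀ i, ContDiff ℝ 1 (g i) := fun i => ContDiff.sum (fun j _ => hdiff i j)
  have hgradat : ∀ i, HasGradientAt (g i) (gradient (g i) xstar) xstar :=
    fun i => ((hgdiff i).differentiable one_ne_zero xstar).hasGradientAt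
  have hb : ∀ (i : Fin N) (m : Fin (n i)),
      blockGrad f i xstar m = gradient (g i) xstar i m := fun i m => rfl
  have hinner : ∀ (i : Fin N) (v : Vec N n), (∀ i', i' ≠ i → v i' = 0) →
      ⟪gradient (g i) xstar, v⟫ = ∑ m, blockGrad f i xstar m * v i m := by
    intro i v hv
    rw [PiLp.inner_apply]
    rw [Finset.sum_eq_single i]
    · rw [PiLp.inner_apply]
      simp [RCLike.inner_apply, hb, mul_comm]
    · intro i' _ hne
      rw [hv i' hne, inner_zero_right]
    · intro h; exact absurd (Finset.mem_univ i) h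
  have hupd : ∀ (i : Fin N) (y : EuclideanSpace ℝ (Fin (n i))) (v : Vec N n),
      v i = y - xstar i → (∀ i', i' ≠ i → v i' = 0) →
      Function.update xstar i y = xstar + v := by
    intro i y v hvi hvo
    funext i'
    rcases eq_or_ne i' i with rfl | hne
    · rw [Function.update_self]
      show y = xstar i' + v i'
      rw [hvi, add_sub_cancel]
    · rw [Function.update_of_ne hne]
      show xstar i' = xstar i' + v i'
      rw [hvo i' hne, add_zero]
  have hlapiff : ∀ i, ((L i).mulVec (blockGrad f i xstar) = 0 ↔
      ∀ j k, blockGrad f i xstar j = blockGrad f i xstar k) :=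
    fun i => connLap_mulVec_eq_zero_iff (hLap i) _
  constructor
  · -- NE → Laplacian condition
    rintro ⟨-, hNE⟩ i
    rw [hlapiff i]
    intro j k
    set w : EuclideanSpace ℝ (Fin (n i)) :=
      WithLp.toLp 2 (fun m => (if m = j then (1:ℝ) else 0) - (if m = k then 1 else 0)) with hw
    have hwsum : ∑ m, w m = 0 := by
      simp [hw, Finset.sum_sub_distrib]
    set v : Vec N n := WithLp.toLp 2 (Pi.single i w) with hv
    set φ : ℝ → ℝ := fun t => g i (xstar + t • v) with hφ
    have hmin : ∀ t : ℝ, φ 0 ≤ φ t := by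
      intro t
      have hyt : ∑ m, (xstar i + t • w : EuclideanSpace ℝ (Fin (n i))) m = R i := by
        show ∑ m, (xstar i m + t * w m) = R i
        rw [Finset.sum_add_distrib, ← Finset.mul_sum, hwsum, mul_zero, add_zero, hfeas i]
      have := hNE i (xstar i + t • w) hyt
      have hupdt : Function.update xstar i (xstar i + t • w) = xstar + t • v := by
        refine hupd i _ (t • v) ?_ ?_
        · show t • v i = _
          rw [hv, WithLp.ofLp_toLp, Pi.single_eq_same, add_sub_cancel_left]
        · intro i' hne
          show t • v i' = 0
          rw [hv, WithLp.ofLp_toLp, Pi.single_eq_of_ne hne, smul_zero]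
      rw [hupdt] at this
      simpa [hφ] using this
    have hloc : IsLocalMin φ 0 := Filter.Eventually.of_forall hmin
    have hd : HasDerivAt φ ⟪gradient (g i) xstar, v⟫ 0 :=
      hasDerivAt_line_grad _ _ _ _ (hgradat i)
    have h0 : ⟪gradient (g i) xstar, v⟫ = 0 := hloc.hasDerivAt_eq_zero hd
    have hvo : ∀ i', i' ≠ i → v i' = 0 := fun i' hne => by
      rw [hv, WithLp.ofLp_toLp]; exact Pi.single_eq_of_ne hne _
    rw [hinner i v hvo, show v i = w by rw [hv, WithLp.ofLp_toLp]; exact Pi.single_eq_same _ _] at h0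
    have : ∑ m, blockGrad f i xstar m * w m =
        blockGrad f i xstar j - blockGrad f i xstar k := by
      simp [hw, mul_sub, Finset.sum_sub_distrib, mul_ite, Finset.sum_ite_eq']
    rw [this] at h0
    linarith
  · -- Laplacian condition → NE
    intro h
    refine ⟨hfeas, ?_⟩
    intro i y hy
    have hc : ∀ j k, blockGrad f i xstar j = blockGrad f i xstar k := (hlapiff i).1 (h i)
    set v : Vec N n := WithLp.toLp 2 (Pi.single i (y - xstar i)) with hv
    set φ : ℝ → ℝ := fun t => g i (xstar + t • v) with hφ
    have hvo : ∀ i', i' ≠ i → v i' = 0 := fun i' hne => by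
      rw [hv, WithLp.ofLp_toLp]; exact Pi.single_eq_of_ne hne _
    have hvi : v i = y - xstar i := by rw [hv, WithLp.ofLp_toLp]; exact Pi.single_eq_same _ _
    have hinner0 : ⟪gradient (g i) xstar, v⟫ = 0 := by
      rw [hinner i v hvo, hvi]
      have hsum : ∑ m, blockGrad f i xstar m * (y - xstar i) m = 0 := by
        rcases isEmpty_or_nonempty (Fin (n i)) with he | hne
        · simp
        · obtain ⟨m0⟩ := hne
          calc ∑ m, blockGrad f i xstar m * (y - xstar i) m
              = ∑ m, blockGrad f i xstar m0 * (y m - xstar i m) := by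
                refine Finset.sum_congr rfl fun m _ => ?_
                rw [hc m m0]; rfl
            _ = blockGrad f i xstar m0 * (∑ m, y m - ∑ m, xstar i m) := by
                rw [← Finset.mul_sum, Finset.sum_sub_distrib]
            _ = 0 := by rw [hy, hfeas i, sub_self, mul_zero]
      exact hsum
    have hd : HasDerivAt φ 0 0 := by
      have := hasDerivAt_line_grad _ _ _ v (hgradat i)
      rwa [hinner0] at this
    have hgconv : ConvexOn ℝ Set.univ (g i) := convexOn_finset_sum _ _ (fun j _ => hconv i j)
    have hφconv : ConvexOn ℝ Set.univ φ := by
      have hcomp := hgconv.comp_affineMap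
        (AffineMap.lineMap xstar (xstar + v) : ℝ →ᵃ[ℝ] Vec N n)
      have heq : (g i) ∘ (AffineMap.lineMap xstar (xstar + v) : ℝ →ᵃ[ℝ] Vec N n) = φ := by
        funext t
        simp only [Function.comp_apply, AffineMap.lineMap_apply_module, hφ]
        congr 1
        module
      rw [heq] at hcomp
      simpa using hcomp
    have hslope := hφconv.le_slope_of_hasDerivAt (Set.mem_univ 0) (Set.mem_univ 1)
      zero_lt_one hd
    rw [slope_def_field] at hslope
    have hφ01 : φ 0 ≤ φ 1 := by
      have : (0:ℝ) ≤ φ 1 - φ 0 := by simpa using hslope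
      linarith
    have h0 : φ 0 = coalObj f i xstar := by simp [hφ, hg]
    have h1 : φ 1 = coalObj f i (WithLp.toLp 2 (Function.update xstar i y)) := by
      rw [hφ]
      simp only [one_smul]
      rw [hupd i y v hvi hvo]
      rfl
    rw [h0, h1] at hφ01
    exact hφ01
end
end

section
/- Let n ∈ ℕ⁺, let M ∈ ℝ^{n²×n²}, and let W_M ∈ ℝ^{n²×n²} be a symmetric positive definite matrix satisfying Mᵀ W_M M − W_M = −I_{n²}. Suppose sequences e(k) ∈ ℝ^{n²} and v(k) ∈ ℝ^{n} satisfy e(k+1) = M e(k) + 1_n ⊗ v(k) for all k ∈ ℕ. Then for every k ∈ ℕ: e(k+1)ᵀ W_M e(k+1) − e(k)ᵀ W_M e(k) ≤ −(1/2)‖e(k)‖² + b‖v(k)‖², where b = n(2‖Mᵀ W_M‖² + ‖W_M‖). (This is Lemma 2 of the paper: with n = n_sum, e(k) the consensus-estimation error e_ξ(k) = ξ(k) − 1_{n_sum} ⊗ x(k), and v(k) = α L̂² P̆(ξ(k)), it gives V_ξ(k+1) − V_ξ(k) ≤ −½‖e_ξ(k)‖² + α² b ‖L̂² P̆(ξ(k))‖²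 for V_ξ(k) = e_ξ(k)ᵀ W_M e_ξ(k).) -/
noncomputable section
open Matrix

/-- The spectral (L² operator) norm of a real matrix. -/
def specNorm {m p : Type*} [Fintype m] [Fintype p] [DecidableEq p] (A : Matrix m p ℝ) : ℝ :=
  ‖LinearMap.toContinuousLinearMap (Matrix.toEuclideanLin A)‖

set_option linter.unusedVariables false
set_option linter.unusedSectionVars false

namespace Stmt5Aux

variable {ι : Type*} [Fintype ι] [DecidableEq ι]

def toE (x : ι → ℝ) : EuclideanSpace ℝ ι := (WithLp.equiv 2 (ι → ℝ)).symm x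

lemma dp_inner (x y : ι → ℝ) : x ⬝ᵥ y = (inner ℝ (toE x) (toE y) : ℝ) := by
  simp [toE, dotProduct, PiLp.inner_apply, RCLike.inner_apply, mul_comm]

lemma norm_mulVec_le (A : Matrix ι ι ℝ) (x : ι → ℝ) :
    ‖toE (A *ᵥ x)‖ ≤ specNorm A * ‖toE x‖ := by
  have h := (LinearMap.toContinuousLinearMap (Matrix.toEuclideanLin A)).le_opNorm (toE x)
  exact h

lemma dp_mulVec_le (A : Matrix ι ι ℝ) (x y : ι → ℝ) :
    x ⬝ᵥ (A *ᵥ y) ≤ specNorm A * (‖toE x‖ * ‖toE y‖) := by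
  rw [dp_inner]
  calc (inner ℝ (toE x) (toE (A *ᵥ y)) : ℝ)
      ≤ ‖toE x‖ * ‖toE (A *ᵥ y)‖ := real_inner_le_norm _ _
    _ ≤ ‖toE x‖ * (specNorm A * ‖toE y‖) := by
        have := norm_mulVec_le A y
        nlinarith [norm_nonneg (toE x)]
    _ = specNorm A * (‖toE x‖ * ‖toE y‖) := by ring

lemma key (M WM : Matrix ι ι ℝ)
    (hsym : WMᵀ = WM) (hLyap : Mᵀ * WM * M - WM = -1)
    (x u : ι → ℝ) :
    (M *ᵥ x + u) ⬝ᵥ (WM *ᵥ (M *ᵥ x + u)) - x ⬝ᵥ (WM *ᵥ x)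
      ≤ -(1/2) * ‖toE x‖^2 + (2 * specNorm (Mᵀ * WM) ^ 2 + specNorm WM) * ‖toE u‖^2 := by
  have flip : ∀ (B : Matrix ι ι ℝ) (a b : ι → ℝ), (B *ᵥ a) ⬝ᵥ b = a ⬝ᵥ (Bᵀ *ᵥ b) := by
    intro B a b
    rw [dotProduct_mulVec, vecMul_transpose]
  have expand : (M *ᵥ x + u) ⬝ᵥ (WM *ᵥ (M *ᵥ x + u))
      = x ⬝ᵥ ((Mᵀ * WM * M) *ᵥ x) + 2 * (x ⬝ᵥ ((Mᵀ * WM) *ᵥ u))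
        + u ⬝ᵥ (WM *ᵥ u) := by
    rw [mulVec_add, dotProduct_add, add_dotProduct, add_dotProduct]
    have t1 : (M *ᵥ x) ⬝ᵥ (WM *ᵥ (M *ᵥ x)) = x ⬝ᵥ ((Mᵀ * WM * M) *ᵥ x) := by
      rw [flip, mulVec_mulVec, mulVec_mulVec]
    have t2 : (M *ᵥ x) ⬝ᵥ (WM *ᵥ u) = x ⬝ᵥ ((Mᵀ * WM) *ᵥ u) := by
      rw [flip, mulVec_mulVec]
    have t3 : u ⬝ᵥ (WM *ᵥ (M *ᵥ x)) = x ⬝ᵥ ((Mᵀ * WM) *ᵥ u) := by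
      rw [mulVec_mulVec, dotProduct_comm, flip, Matrix.transpose_mul,
        hsym]
    rw [t1, t2, t3]; ring
  have quad : x ⬝ᵥ ((Mᵀ * WM * M) *ᵥ x) - x ⬝ᵥ (WM *ᵥ x) = -‖toE x‖^2 := by
    have h : x ⬝ᵥ ((Mᵀ * WM * M) *ᵥ x) - x ⬝ᵥ (WM *ᵥ x)
        = x ⬝ᵥ ((Mᵀ * WM * M - WM) *ᵥ x) := by
      rw [sub_mulVec, dotProduct_sub]
    rw [h, hLyap, neg_mulVec, one_mulVec, dotProduct_neg, dp_inner,
      real_inner_self_eq_norm_sq]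
  have cross := dp_mulVec_le (Mᵀ * WM) x u
  have diag := dp_mulVec_le WM u u
  have hA : 0 ≤ specNorm (Mᵀ * WM) := norm_nonneg _
  have hx : 0 ≤ ‖toE x‖ := norm_nonneg _
  have hu : 0 ≤ ‖toE u‖ := norm_nonneg _
  have hW : 0 ≤ specNorm WM := norm_nonneg _
  nlinarith [expand, quad, sq_nonneg (‖toE x‖ - 2 * specNorm (Mᵀ * WM) * ‖toE u‖)]

end Stmt5Aux

/-- Lemma 2 of the paper: for a Lyapunov pair `(M, W_M)` with
`Mᵀ W_M M − W_M = −I` and the recursion `e(k+1) = M e(k) + 1_n ⊗ v(k)`, the quadratic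
form `V(k) = e(k)ᵀ W_M e(k)` satisfies
`V(k+1) − V(k) ≤ −(1/2)‖e(k)‖² + n(2‖Mᵀ W_M‖² + ‖W_M‖)‖v(k)‖²`. -/
theorem statement5 (n : ℕ) (hn : 0 < n)
    (M WM : Matrix (Fin n × Fin n) (Fin n × Fin n) ℝ)
    (hWM : WM.PosDef)
    (hLyap : Mᵀ * WM * M - WM = -1)
    (e : ℕ → EuclideanSpace ℝ (Fin n × Fin n))
    (v : ℕ → EuclideanSpace ℝ (Fin n))
    (hrec : ∀ (k : ℕ) (up : Fin n × Fin n), e (k + 1) up = M.mulVec (e k) up + v k up.2)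
    (k : ℕ) :
    e (k + 1) ⬝ᵥ WM.mulVec (e (k + 1)) - e k ⬝ᵥ WM.mulVec (e k)
      ≤ -(1 / 2) * ‖e k‖ ^ 2
        + ((n : ℝ) * (2 * specNorm (Mᵀ * WM) ^ 2 + specNorm WM)) * ‖v k‖ ^ 2 := by
  have hsym : WMᵀ = WM := by
    have h := hWM.isHermitian
    simpa [Matrix.IsHermitian, Matrix.conjTranspose_eq_transpose_of_trivial] using h
  set u₀ : (Fin n × Fin n) → ℝ := fun up => v k up.2 with hu₀
  have hfn : e (k + 1) = M *ᵥ (e k) + u₀ := funext fun up => hrec k up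
  have hgoal_eq : e (k + 1) ⬝ᵥ WM.mulVec (e (k + 1))
      = (M *ᵥ (e k) + u₀) ⬝ᵥ (WM *ᵥ (M *ᵥ (e k) + u₀)) := by rw [hfn]
  have hnorm : ‖Stmt5Aux.toE ((e k : (Fin n × Fin n) → ℝ))‖ = ‖e k‖ := rfl
  have hu2 : ‖Stmt5Aux.toE u₀‖ ^ 2 = (n : ℝ) * ‖v k‖ ^ 2 := by
    have h1 : ‖Stmt5Aux.toE u₀‖ ^ 2 = ∑ up : Fin n × Fin n, (v k up.2) ^ 2 := by
      rw [EuclideanSpace.norm_eq, Real.sq_sqrt (by positivity)]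
      simp [Stmt5Aux.toE, sq_abs, hu₀]
    have h2 : ‖v k‖ ^ 2 = ∑ j, (v k j) ^ 2 := by
      rw [EuclideanSpace.norm_eq, Real.sq_sqrt (by positivity)]
      simp [sq_abs]
    rw [h1, h2, Fintype.sum_prod_type]
    simp [Finset.sum_const, Finset.card_univ, nsmul_eq_mul]
  calc e (k + 1) ⬝ᵥ WM.mulVec (e (k + 1)) - e k ⬝ᵥ WM.mulVec (e k)
      = (M *ᵥ (e k) + u₀) ⬝ᵥ (WM *ᵥ (M *ᵥ (e k) + u₀)) - e k ⬝ᵥ WM.mulVec (e k) := by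
        rw [hgoal_eq]
    _ ≤ -(1/2) * ‖Stmt5Aux.toE ((e k : (Fin n × Fin n) → ℝ))‖ ^ 2
        + (2 * specNorm (Mᵀ * WM) ^ 2 + specNorm WM) * ‖Stmt5Aux.toE u₀‖ ^ 2 :=
        Stmt5Aux.key M WM hsym hLyap (e k) u₀
    _ = -(1 / 2) * ‖e k‖ ^ 2
        + ((n : ℝ) * (2 * specNorm (Mᵀ * WM) ^ 2 + specNorm WM)) * ‖v k‖ ^ 2 := by
        rw [hnorm, hu2]; ring
end
end

section
/- Let G be a connected undirected graph on n vertices and let C ∈ ℝ^{n×n} be a doubly stochastic matrix (nonnegative entries, every row sum and every column sum equal to 1) such that all diagonal entries of C are strictly positive and, for j ≠ m, the (j,m) entry of C is strictly positive if and only if {j,m} is an edge of G. Then C^k converges to (1/n)1_n 1_nᵀ as k → ∞; equivalently, the matrix C̄ = C − (1/n)1_n 1_nᵀ is a Schur matrix (its spectral radius is strictly less than 1), so C̄^k → 0. -/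
noncomputable section
open Matrix

namespace Stmt11Aux

variable {n : ℕ} {C : Matrix (Fin n) (Fin n) ℝ} {G : SimpleGraph (Fin n)}

/-- Contraction of oscillation by a stochastic matrix with entries ≥ ε. -/
lemma contraction (hne : (Finset.univ : Finset (Fin n)).Nonempty)
    (P : Matrix (Fin n) (Fin n) ℝ) (ε : ℝ) (hε : 0 ≤ ε)
    (hP : ∀ i j, ε ≤ P i j) (hProw : ∀ i, ∑ j, P i j = 1) (x : Fin n → ℝ) :
    Finset.univ.sup' hne (P.mulVec x) - Finset.univ.inf' hne (P.mulVec x)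
      ≤ (1 - 2*ε) * (Finset.univ.sup' hne x - Finset.univ.inf' hne x) := by
  set m := Finset.univ.inf' hne x with hm
  set M := Finset.univ.sup' hne x with hM
  have hmM : m ≤ M := by
    obtain ⟨i, _, hi⟩ := Finset.exists_mem_eq_inf' hne x
    rw [hm, hi]
    exact Finset.le_sup' x (Finset.mem_univ i)
  obtain ⟨l₀, _, hl₀⟩ := Finset.exists_mem_eq_inf' hne x
  obtain ⟨l₁, _, hl₁⟩ := Finset.exists_mem_eq_sup' hne x
  have hub : ∀ i, P.mulVec x i ≤ M - ε * (M - m) := by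
    intro i
    have h1 : P.mulVec x i = ∑ l, P i l * x l := rfl
    have h2 : ∑ l, P i l * x l
        = P i l₀ * x l₀ + ∑ l ∈ Finset.univ.erase l₀, P i l * x l :=
      (Finset.add_sum_erase _ _ (Finset.mem_univ l₀)).symm
    have h3 : ∑ l ∈ Finset.univ.erase l₀, P i l * x l
        ≤ ∑ l ∈ Finset.univ.erase l₀, P i l * M := by
      refine Finset.sum_le_sum fun l _ => ?_
      exact mul_le_mul_of_nonneg_left (Finset.le_sup' x (Finset.mem_univ l))
        (le_trans hε (hP i l))
    have h4 : ∑ l ∈ Finset.univ.erase l₀, P i l = 1 - P i l₀ := by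
      rw [Finset.sum_erase_eq_sub (Finset.mem_univ l₀), hProw]
    have h5 : ∑ l ∈ Finset.univ.erase l₀, P i l * M = (1 - P i l₀) * M := by
      rw [← Finset.sum_mul, h4]
    have h6 : P i l₀ * x l₀ = P i l₀ * m := by rw [← hl₀]
    nlinarith [hP i l₀, hmM]
  have hlb : ∀ i, m + ε * (M - m) ≤ P.mulVec x i := by
    intro i
    have h1 : P.mulVec x i = ∑ l, P i l * x l := rfl
    have h2 : ∑ l, P i l * x l
        = P i l₁ * x l₁ + ∑ l ∈ Finset.univ.erase l₁, P i l * x l :=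
      (Finset.add_sum_erase _ _ (Finset.mem_univ l₁)).symm
    have h3 : ∑ l ∈ Finset.univ.erase l₁, P i l * m
        ≤ ∑ l ∈ Finset.univ.erase l₁, P i l * x l := by
      refine Finset.sum_le_sum fun l _ => ?_
      exact mul_le_mul_of_nonneg_left (Finset.inf'_le x (Finset.mem_univ l))
        (le_trans hε (hP i l))
    have h4 : ∑ l ∈ Finset.univ.erase l₁, P i l = 1 - P i l₁ := by
      rw [Finset.sum_erase_eq_sub (Finset.mem_univ l₁), hProw]
    have h5 : ∑ l ∈ Finset.univ.erase l₁, P i l * m = (1 - P i l₁) * m := by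
      rw [← Finset.sum_mul, h4]
    have h6 : P i l₁ * x l₁ = P i l₁ * M := by rw [← hl₁]
    nlinarith [hP i l₁, hmM]
  have hs : Finset.univ.sup' hne (P.mulVec x) ≤ M - ε * (M - m) :=
    Finset.sup'_le _ _ fun i _ => hub i
  have hi : m + ε * (M - m) ≤ Finset.univ.inf' hne (P.mulVec x) :=
    Finset.le_inf' _ _ fun i _ => hlb i
  nlinarith

lemma pow_entry_nonneg (hnn : ∀ u v, 0 ≤ C u v) : ∀ k (i j : Fin n), 0 ≤ (C ^ k) i j := by
  intro k
  induction k with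
  | zero => intro i j; rw [pow_zero]; by_cases h : i = j <;> simp [one_apply, h]
  | succ k ih =>
    intro i j
    rw [pow_succ, Matrix.mul_apply]
    exact Finset.sum_nonneg fun l _ => mul_nonneg (ih i l) (hnn l j)

lemma pow_row_sum (hrow : ∀ u, ∑ v, C u v = 1) : ∀ k (i : Fin n), ∑ j, (C ^ k) i j = 1 := by
  intro k
  induction k with
  | zero => intro i; simp [one_apply]
  | succ k ih =>
    intro i
    simp only [pow_succ, Matrix.mul_apply]
    rw [Finset.sum_comm]
    calc ∑ l, ∑ j, (C ^ k) i l * C l j = ∑ l, (C ^ k) i l * ∑ j, C l j := by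
          simp [Finset.mul_sum]
      _ = 1 := by simp [hrow, ih]

lemma pow_col_sum (hcol : ∀ v, ∑ u, C u v = 1) : ∀ k (j : Fin n), ∑ i, (C ^ k) i j = 1 := by
  intro k
  induction k with
  | zero => intro j; simp [one_apply]
  | succ k ih =>
    intro j
    simp only [pow_succ', Matrix.mul_apply]
    rw [Finset.sum_comm]
    calc ∑ l, ∑ i, C i l * (C ^ k) l j = ∑ l, (∑ i, C i l) * (C ^ k) l j := by
          simp [Finset.sum_mul]
      _ = 1 := by simp [hcol, ih]

lemma pow_pos_of_walk (hnn : ∀ u v, 0 ≤ C u v) (hd : ∀ u, 0 < C u u)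
    (hadj : ∀ u v, G.Adj u v → 0 < C u v) :
    ∀ k (i j : Fin n) (w : G.Walk i j), w.length ≤ k → 0 < (C ^ k) i j := by
  intro k
  induction k with
  | zero =>
    intro i j w hw
    cases w with
    | nil => simp [one_apply]
    | cons h w' => simp at hw
  | succ k ih =>
    intro i j w hw
    rw [pow_succ', Matrix.mul_apply]
    refine Finset.sum_pos' (fun l _ => mul_nonneg (hnn i l) (pow_entry_nonneg hnn k l j)) ?_
    cases w with
    | nil =>
      exact ⟨i, Finset.mem_univ i, mul_pos (hd i) (ih i i SimpleGraph.Walk.nil (by simp))⟩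
    | @cons _ l _ h w' =>
      have hl : w'.length ≤ k := by
        simpa [SimpleGraph.Walk.length_cons] using hw
      exact ⟨l, Finset.mem_univ l, mul_pos (hadj i l h) (ih l j w' hl)⟩

lemma pow_n_pos (hnn : ∀ u v, 0 ≤ C u v) (hd : ∀ u, 0 < C u u)
    (hadj : ∀ u v, G.Adj u v → 0 < C u v) (hG : G.Connected) :
    ∀ i j : Fin n, 0 < (C ^ n) i j := by
  intro i j
  have hr : G.Reachable i j := hG i j
  refine hr.elim fun w => ?_
  have hp : (w.toPath : G.Walk i j).IsPath := w.toPath.2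
  have hlen : (w.toPath : G.Walk i j).length < n := by
    simpa using hp.length_lt
  exact pow_pos_of_walk hnn hd hadj n i j w.toPath (le_of_lt hlen)

end Stmt11Aux

open Filter Stmt11Aux

/-- a doubly stochastic matrix with positive diagonal whose off-diagonal
positivity pattern is a connected undirected graph satisfies `C^k → (1/n)·1 1ᵀ`;
equivalently `C̄ = C − (1/n)·1 1ᵀ` is Schur, so `C̄^k → 0`. -/
theorem statement11 (n : ℕ) (hn : 0 < n)
    (G : SimpleGraph (Fin n)) (hG : G.Connected)
    (C : Matrix (Fin n) (Fin n) ℝ)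
    (hnonneg : ∀ u v, 0 ≤ C u v)
    (hrow : ∀ u, ∑ v, C u v = 1)
    (hcol : ∀ v, ∑ u, C u v = 1)
    (hdiagpos : ∀ u, 0 < C u u)
    (hoffdiag : ∀ u v, u ≠ v → (0 < C u v ↔ G.Adj u v)) :
    Filter.Tendsto (fun k => C ^ k) Filter.atTop
      (nhds (Matrix.of fun _ _ => (1 : ℝ) / n)) ∧
    (∀ z ∈ spectrum ℂ
        ((C - Matrix.of fun _ _ => (1 : ℝ) / n).map Complex.ofReal),
      ‖z‖ < 1) ∧
    Filter.Tendsto (fun k => (C - Matrix.of fun _ _ => (1 : ℝ) / n) ^ k) Filter.atTop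
      (nhds 0) := by
  have hne : (Finset.univ : Finset (Fin n)).Nonempty := ⟨⟨0, hn⟩, Finset.mem_univ _⟩
  have hadj : ∀ u v, G.Adj u v → 0 < C u v := fun u v h => (hoffdiag u v h.ne).mpr h
  have hppos : ∀ i j, 0 < (C ^ n) i j := pow_n_pos hnonneg hdiagpos hadj hG
  -- the minimal entry of C^n
  have hnep : ((Finset.univ : Finset (Fin n × Fin n))).Nonempty :=
    ⟨(⟨0, hn⟩, ⟨0, hn⟩), Finset.mem_univ _⟩
  set δ : ℝ := Finset.univ.inf' hnep (fun p : Fin n × Fin n => (C ^ n) p.1 p.2) with hδ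
  have hδpos : 0 < δ := by
    rw [hδ, Finset.lt_inf'_iff]
    exact fun p _ => hppos p.1 p.2
  set ε : ℝ := min δ (1/2) with hεdef
  have hε0 : 0 < ε := lt_min hδpos (by norm_num)
  have hεle : ∀ i j, ε ≤ (C ^ n) i j := fun i j =>
    le_trans (min_le_left _ _)
      (Finset.inf'_le (fun p : Fin n × Fin n => (C ^ n) p.1 p.2) (Finset.mem_univ (i, j)))
  set r : ℝ := 1 - 2 * ε with hrdef
  have hr0 : 0 ≤ r := by
    have : ε ≤ 1/2 := min_le_right _ _
    rw [hrdef]; linarith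
  have hr1 : r < 1 := by rw [hrdef]; linarith
  -- entrywise convergence
  have key : ∀ j i, Tendsto (fun k => (C ^ k) i j) atTop (nhds ((1 : ℝ)/n)) := by
    intro j
    set col : ℕ → Fin n → ℝ := fun k i => (C ^ k) i j with hcoldef
    have hrec : ∀ k, col (k+1) = C.mulVec (col k) := by
      intro k; funext i
      simp only [hcoldef, pow_succ', Matrix.mul_apply]
      rfl
    have hrecn : ∀ k, col (k+n) = (C ^ n).mulVec (col k) := by
      intro k; funext i
      have : C ^ (k + n) = C ^ n * C ^ k := by rw [add_comm, pow_add]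
      simp only [hcoldef, this, Matrix.mul_apply]
      rfl
    set g : ℕ → ℝ := fun k =>
      Finset.univ.sup' hne (col k) - Finset.univ.inf' hne (col k) with hgdef
    have hg0 : ∀ k, 0 ≤ g k := by
      intro k
      obtain ⟨i0, _⟩ := id hne
      have h1 : Finset.univ.inf' hne (col k) ≤ col k i0 :=
        Finset.inf'_le _ (Finset.mem_univ i0)
      have h2 : col k i0 ≤ Finset.univ.sup' hne (col k) :=
        Finset.le_sup' _ (Finset.mem_univ i0)
      rw [hgdef]; dsimp only; linarith
    have hganti : Antitone g := by
      refine antitone_nat_of_succ_le fun k => ?_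
      have h := contraction hne C 0 le_rfl (fun i l => hnonneg i l) hrow (col k)
      rw [hgdef]; dsimp only
      rw [hrec k]
      linarith [h]
    have hgstep : ∀ k, g (k + n) ≤ r * g k := by
      intro k
      have h := contraction hne (C ^ n) ε hε0.le hεle (pow_row_sum hrow n) (col k)
      rw [hgdef]; dsimp only
      rw [hrecn k, hrdef]
      linarith [h]
    have hgiter : ∀ m k, g (k + n * m) ≤ r ^ m * g k := by
      intro m
      induction m with
      | zero => intro k; simp
      | succ m ih =>
        intro k
        have heq : k + n * (m + 1) = (k + n * m) + n := by ring
        rw [heq]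
        calc g ((k + n * m) + n) ≤ r * g (k + n * m) := hgstep _
          _ ≤ r * (r ^ m * g k) := by
              exact mul_le_mul_of_nonneg_left (ih k) hr0
          _ = r ^ (m + 1) * g k := by ring
    have hdivtend : Tendsto (fun k : ℕ => k / n) atTop atTop :=
      Filter.tendsto_atTop_atTop.mpr fun b =>
        ⟨n * b, fun a ha => (Nat.le_div_iff_mul_le hn).mpr (by rw [mul_comm]; exact ha)⟩
    have hbt : Tendsto (fun k : ℕ => r ^ (k / n) * g 0) atTop (nhds 0) := by
      have h1 := (tendsto_pow_atTop_nhds_zero_of_lt_one hr0 hr1).comp hdivtend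
      simpa using h1.mul_const (g 0)
    have hgb : ∀ k, g k ≤ r ^ (k / n) * g 0 := by
      intro k
      have h1 : g k ≤ g (n * (k / n)) := hganti (Nat.mul_div_le k n)
      have h2 : g (0 + n * (k / n)) ≤ r ^ (k / n) * g 0 := hgiter (k / n) 0
      simpa using h1.trans (by simpa using h2)
    have hgt : Tendsto g atTop (nhds 0) := squeeze_zero hg0 hgb hbt
    intro i
    have hbound : ∀ k, |col k i - 1/(n:ℝ)| ≤ g k := by
      intro k
      have hsum : ∑ i', col k i' = 1 := pow_col_sum hcol k j
      have h1 : Finset.univ.inf' hne (col k) ≤ col k i :=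
        Finset.inf'_le _ (Finset.mem_univ i)
      have h2 : col k i ≤ Finset.univ.sup' hne (col k) :=
        Finset.le_sup' _ (Finset.mem_univ i)
      have h3 : (1:ℝ) ≤ n * Finset.univ.sup' hne (col k) := by
        have := Finset.sum_le_card_nsmul Finset.univ (col k)
          (Finset.univ.sup' hne (col k)) (fun x _ => Finset.le_sup' _ (Finset.mem_univ x))
        rw [hsum] at this
        simpa [nsmul_eq_mul] using this
      have h4 : (n:ℝ) * Finset.univ.inf' hne (col k) ≤ 1 := by
        have := Finset.card_nsmul_le_sum Finset.univ (col k)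
          (Finset.univ.inf' hne (col k)) (fun x _ => Finset.inf'_le _ (Finset.mem_univ x))
        rw [hsum] at this
        simpa [nsmul_eq_mul] using this
      have hnpos : (0:ℝ) < n := Nat.cast_pos.mpr hn
      have h5 : Finset.univ.inf' hne (col k) ≤ 1/(n:ℝ) := by
        rw [le_div_iff₀ hnpos]; linarith
      have h6 : (1:ℝ)/n ≤ Finset.univ.sup' hne (col k) := by
        rw [div_le_iff₀ hnpos]; linarith
      rw [abs_sub_le_iff]
      constructor <;> (rw [hgdef]; dsimp only; linarith)
    rw [tendsto_iff_dist_tendsto_zero]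
    simp only [Real.dist_eq]
    exact squeeze_zero (fun k => abs_nonneg _) hbound hgt
  set J : Matrix (Fin n) (Fin n) ℝ := Matrix.of fun _ _ => (1 : ℝ) / n with hJ
  have h1 : Tendsto (fun k => C ^ k) atTop (nhds J) := by
    refine tendsto_pi_nhds.mpr fun i => tendsto_pi_nhds.mpr fun j => ?_
    exact key j i
  -- algebra with J
  have hnne : (n:ℝ) ≠ 0 := Nat.cast_ne_zero.mpr hn.ne'
  have hCJ : C * J = J := by
    ext i j
    simp only [Matrix.mul_apply, hJ, Matrix.of_apply]
    rw [← Finset.sum_mul, hrow]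
    ring
  have hJC : J * C = J := by
    ext i j
    simp only [Matrix.mul_apply, hJ, Matrix.of_apply]
    rw [← Finset.mul_sum, hcol]
    ring
  have hJJ : J * J = J := by
    ext i j
    simp only [Matrix.mul_apply, hJ, Matrix.of_apply]
    rw [Finset.sum_const, Finset.card_univ, Fintype.card_fin, nsmul_eq_mul]
    field_simp
  have hCkJ : ∀ k, C ^ k * J = J := by
    intro k
    induction k with
    | zero => simp
    | succ k ih => rw [pow_succ, mul_assoc, hCJ, ih]
  have hbar : ∀ k, (C - J) ^ (k + 1) = C ^ (k + 1) - J := by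
    intro k
    induction k with
    | zero => simp
    | succ k ih =>
      rw [pow_succ, ih, sub_mul, mul_sub, mul_sub, hCkJ (k+1), hJC, hJJ, ← pow_succ]
      abel
  have h3 : Tendsto (fun k => (C - J) ^ k) atTop (nhds 0) := by
    have ht : Tendsto (fun k => C ^ k - J) atTop (nhds 0) := by
      have := h1.sub (tendsto_const_nhds : Tendsto (fun _ : ℕ => J) atTop (nhds J))
      simpa using this
    refine Filter.Tendsto.congr' ?_ ht
    filter_upwards [Filter.eventually_ge_atTop 1] with k hk
    obtain ⟨m, rfl⟩ := Nat.exists_eq_add_of_le hk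
    rw [add_comm 1 m, hbar m]
  refine ⟨h1, ?_, h3⟩
  -- spectrum part
  intro z hz
  set M : Matrix (Fin n) (Fin n) ℂ := (C - J).map Complex.ofReal with hM
  have hMpow : ∀ k, M ^ k = ((C - J) ^ k).map Complex.ofReal := by
    intro k
    have := map_pow (Complex.ofRealHom.mapMatrix) (C - J) k
    exact this.symm
  have hMt : ∀ i l, Tendsto (fun k => (M ^ k) i l) atTop (nhds 0) := by
    intro i l
    have hent : Tendsto (fun k => ((C - J) ^ k) i l) atTop (nhds 0) := by
      have := tendsto_pi_nhds.mp (tendsto_pi_nhds.mp h3 i) l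
      simpa using this
    have := (Complex.continuous_ofReal.tendsto 0).comp hent
    simp only [hMpow]
    simpa [Function.comp_def] using this
  rw [spectrum.mem_iff] at hz
  have hdet0 : ((algebraMap ℂ (Matrix (Fin n) (Fin n) ℂ)) z - M).det = 0 := by
    by_contra h
    exact hz ((Matrix.isUnit_iff_isUnit_det _).mpr (isUnit_iff_ne_zero.mpr h))
  obtain ⟨v, hv0, hv⟩ := Matrix.exists_mulVec_eq_zero_iff.mpr hdet0
  have hMv : M.mulVec v = z • v := by
    rw [Algebra.algebraMap_eq_smul_one] at hv
    rw [Matrix.sub_mulVec, Matrix.smul_mulVec, Matrix.one_mulVec, sub_eq_zero] at hv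
    exact hv.symm
  have hpowv : ∀ k, (M ^ k).mulVec v = z ^ k • v := by
    intro k
    induction k with
    | zero => simp [Matrix.one_mulVec]
    | succ k ih =>
      rw [pow_succ', ← Matrix.mulVec_mulVec, ih, Matrix.mulVec_smul, hMv,
        smul_smul, ← pow_succ]
  obtain ⟨i, hvi⟩ := Function.ne_iff.mp hv0
  have ht1 : Tendsto (fun k => ((M ^ k).mulVec v) i) atTop (nhds 0) := by
    have heq : ∀ k, ((M ^ k).mulVec v) i = ∑ l, (M ^ k) i l * v l := fun k => rfl
    simp only [heq]
    have := tendsto_finset_sum (f := fun l k => (M ^ k) i l * v l)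
      (a := fun l => 0) Finset.univ (fun l _ => by simpa using (hMt i l).mul_const (v l))
    simpa using this
  have ht2 : Tendsto (fun k => z ^ k * v i) atTop (nhds 0) := by
    have heq : ∀ k, ((M ^ k).mulVec v) i = z ^ k * v i := by
      intro k; rw [hpowv k]; rfl
    simpa [heq] using ht1
  have ht3 : Tendsto (fun k => z ^ k) atTop (nhds 0) := by
    have := ht2.mul_const (v i)⁻¹
    simp only [zero_mul] at this
    refine this.congr fun k => ?_
    rw [mul_assoc, mul_inv_cancel₀ hvi, mul_one]
  have htn : Tendsto (fun k => ‖z‖ ^ k) atTop (nhds 0) := by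
    have := tendsto_zero_iff_norm_tendsto_zero.mp ht3
    simpa [norm_pow] using this
  have h2 := tendsto_pow_atTop_nhds_zero_iff.mp htn
  rwa [abs_of_nonneg (norm_nonneg _)] at h2
end
end
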